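/- Fix a type Σ, a natural number n, and a list u over Σ, and let R be the relation on lists over Σ defined by: R s s' iff there exist lists v, t with s = v ++ t, v of length n, and s' = u ++ t. If s_1, …, s_k (k ≥ 1) are lists with R s_i s_{i+1} for all 1 ≤ i < k and R s_k s_1, then s_1 = s_2 = … = s_k. In other words, every R-cycle consists of a single repeated list. -/

import Mathlib

/-- The relation `R(n,u)` on lists over `α`: `R s s'` iff there are lists
`v, t` with `s = v ++ t`, `v` of length `n`, and `s' = u ++ t`. -/
def Rrel {α : Type} (n : ℕ) (u : List α) (s s' : List α) : Prop :=
  ∃ v t : List α, s = v ++ t ∧ v.length = n ∧ s' = u ++ t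

lemma Rrel_key {α : Type} {n : ℕ} {u : List α} {s s' : List α} (h : Rrel n u s s') :
    s' = u ++ s.drop n ∧ s'.length + n = s.length + u.length := by
  obtain ⟨v, t, rfl, hv, rfl⟩ := h
  constructor
  · rw [← hv, List.drop_left]
  · simp [List.length_append]
    omega

/-- Every `R`-cycle `s 0, s 1, …, s (k-1), s 0` (with `k ≥ 1`) consists of a
single repeated list: all its members are equal. -/
theorem Rrel_cycle_constant {α : Type} (n : ℕ) (u : List α)
    (k : ℕ) (hk : 1 ≤ k) (s : ℕ → List α)
    (hchain : ∀ i, i + 1 < k → Rrel n u (s i) (s (i + 1)))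
    (hcycle : Rrel n u (s (k - 1)) (s 0)) :
    ∀ i < k, ∀ j < k, s i = s j := by
  have hlen : ∀ i, i + 1 < k → (s (i+1)).length + n = (s i).length + u.length :=
    fun i h => (Rrel_key (hchain i h)).2
  have hlin : ∀ i, i < k → (s i).length + i * n = (s 0).length + i * u.length := by
    intro i
    induction i with
    | zero => simp
    | succ i ih =>
      intro h
      have h1 := hlen i h
      have h2 := ih (by omega)
      have e1 : (i+1)*n = i*n + n := by ring
      have e2 : (i+1)*u.length = i*u.length + u.length := by ring
      omega
  have hun : u.length = n := by
    obtain ⟨m, rfl⟩ : ∃ m, k = m + 1 := ⟨k - 1, by omega⟩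
    have h1 := (Rrel_key hcycle).2
    have h2 := hlin m (by omega)
    simp only [Nat.add_sub_cancel] at h1
    have e : (m+1) * u.length = (m+1) * n := by
      have e1 : (m+1) * u.length = m * u.length + u.length := by ring
      have e2 : (m+1) * n = m * n + n := by ring
      omega
    have := Nat.eq_of_mul_eq_mul_left (show 0 < m + 1 by omega) e
    omega
  have hdrop : ∀ i, i < k → (s i).drop n = (s 0).drop n := by
    intro i
    induction i with
    | zero => intro _; rfl
    | succ i ih =>
      intro h
      have hd : List.drop n (u ++ List.drop n (s i)) = List.drop n (s i) := by
        rw [← hun]; exact List.drop_left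
      rw [(Rrel_key (hchain i h)).1, hd]
      exact ih (by omega)
  have hform : ∀ i, i < k → s i = u ++ (s 0).drop n := by
    intro i hi
    cases i with
    | zero =>
      have h0 := (Rrel_key hcycle).1
      rw [hdrop (k-1) (by omega)] at h0
      exact h0
    | succ j =>
      rw [(Rrel_key (hchain j hi)).1, hdrop j (by omega)]
  intro i hi j hj
  rw [hform i hi, hform j hj]
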